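/- Let ω, Λ be positive integers with Λ ≥ 2ω − 1 and let R = Λ + ω − 1, C = Λ. For the base matrix W with nonzero value w = (1/(2α))(1 − sqrt(1 − 4α(1−α)/ω)) on entries (r,c) with c ≤ r ≤ c + ω − 1 and α = 1/2, the expected number of items in any single test of the spatially coupled design with p items is at most (p/C)·ω·(1/2)(1 − sqrt(1 − 1/ω)), and this quantity is at most p/(4C)·(1 + 1/(2ω·sqrt(1 − 1/ω))) for ω ≥ 2. -/

import Mathlib

/-- Expected number of items per test in the spatially coupled design with `α = 1/2`:
each test includes items from at most `ω` adjacent column blocks of size `p/C` (with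
`C = Λ`), each item with probability `(1/2)(1 - √(1-1/ω))`, so the expected count is at
most `(p/C)·ω·(1/2)(1-√(1-1/ω))`, which for `ω ≥ 2` is at most
`p/(4C)·(1 + 1/(2ω√(1-1/ω)))`. -/
theorem stmt_18 (ω Λ p : ℕ) (hω : 1 ≤ ω) (hΛ : 2*ω - 1 ≤ Λ)
    (r : ℕ) (hr : r ∈ Finset.Icc 1 (Λ + ω - 1)) :
    (∑ c ∈ Finset.Icc 1 Λ,
        (if c ≤ r ∧ r ≤ c + ω - 1 then
          ((p:ℝ)/Λ) * ((1/2) * (1 - Real.sqrt (1 - 1/ω))) else 0))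
      ≤ ((p:ℝ)/Λ) * ω * ((1/2) * (1 - Real.sqrt (1 - 1/ω))) ∧
    (2 ≤ ω →
      ((p:ℝ)/Λ) * ω * ((1/2) * (1 - Real.sqrt (1 - 1/ω)))
        ≤ (p:ℝ)/(4*Λ) * (1 + 1/(2*ω*Real.sqrt (1 - 1/ω)))) := by
  set s := Real.sqrt (1 - 1/(ω:ℝ)) with hs
  set K := ((p:ℝ)/Λ) * ((1/2) * (1 - s)) with hK
  have hΛpos : 0 < Λ := by omega
  have hs_le_one : s ≤ 1 := by
    rw [hs]
    apply Real.sqrt_le_one.mpr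
    have : (0:ℝ) ≤ 1/(ω:ℝ) := by positivity
    linarith
  have hKnn : 0 ≤ K := by
    apply mul_nonneg (by positivity)
    apply mul_nonneg (by norm_num)
    linarith
  constructor
  · rw [← Finset.sum_filter, Finset.sum_const, nsmul_eq_mul]
    have hcard : ((Finset.Icc 1 Λ).filter (fun c => c ≤ r ∧ r ≤ c + ω - 1)).card ≤ ω := by
      have hsub : (Finset.Icc 1 Λ).filter (fun c => c ≤ r ∧ r ≤ c + ω - 1)
          ⊆ Finset.Icc (r + 1 - ω) r := by
        intro c hc
        simp only [Finset.mem_filter, Finset.mem_Icc] at hc ⊢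
        omega
      calc ((Finset.Icc 1 Λ).filter (fun c => c ≤ r ∧ r ≤ c + ω - 1)).card
          ≤ (Finset.Icc (r + 1 - ω) r).card := Finset.card_le_card hsub
        _ ≤ ω := by rw [Nat.card_Icc]; omega
    calc (((Finset.Icc 1 Λ).filter (fun c => c ≤ r ∧ r ≤ c + ω - 1)).card : ℝ) * K
        ≤ (ω:ℝ) * K := by
          apply mul_le_mul_of_nonneg_right _ hKnn
          exact_mod_cast hcard
      _ = ((p:ℝ)/Λ) * ω * ((1/2) * (1 - s)) := by rw [hK]; ring
  · intro hω2
    have hω2' : (2:ℝ) ≤ (ω:ℝ) := by exact_mod_cast hω2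
    have h1 : (0:ℝ) < 1 - 1/(ω:ℝ) := by
      have : 1/(ω:ℝ) ≤ 1/2 := by
        apply div_le_div_of_nonneg_left <;> linarith
      linarith
    have hs_pos : 0 < s := Real.sqrt_pos.mpr h1
    have hs2 : s^2 = 1 - 1/(ω:ℝ) := Real.sq_sqrt h1.le
    have hωpos : (0:ℝ) < ω := by linarith
    have hω1s : (ω:ℝ) * (1 - s) * (1 + s) = 1 := by
      have : (1:ℝ) - s^2 = 1/(ω:ℝ) := by linarith
      field_simp at this
      nlinarith [this]
    have key : (ω:ℝ) * ((1/2) * (1 - s)) ≤ (1/4) * (1 + 1/(2*ω*s)) := by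
      have expand : (1:ℝ)/4 * (1 + 1/(2*ω*s)) = ((ω:ℝ)*s/4 + 1/8) / (ω*s) := by
        field_simp; ring
      rw [expand, le_div_iff₀ (by positivity)]
      have e1 : (ω:ℝ)*(1-s)*(1+s)*(ω*s*(1+s)) = ω*s*(1+s) := by rw [hω1s]; ring
      have e2 : (ω:ℝ)*(1-s)*(1+s)*(s/2) = s/2 := by rw [hω1s]; ring
      nlinarith [e1, e2, sq_nonneg s, sq_nonneg (1-s), mul_pos hωpos hs_pos, sq_nonneg (1+s)]
    have hpΛ : (0:ℝ) ≤ (p:ℝ)/Λ := by positivity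
    calc ((p:ℝ)/Λ) * ω * ((1/2) * (1 - s)) = ((p:ℝ)/Λ) * ((ω:ℝ) * ((1/2)*(1-s))) := by ring
      _ ≤ ((p:ℝ)/Λ) * ((1/4) * (1 + 1/(2*ω*s))) := mul_le_mul_of_nonneg_left key hpΛ
      _ = (p:ℝ)/(4*Λ) * (1 + 1/(2*ω*s)) := by ring
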